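/- Let {p_θ(w|z)} be a differentiable, strictly positive family of conditional pmfs on finite sets, and let P* be a target joint distribution on (Z,W) with P*(w|z) = p_{θ1}(w|z) at parameter θ1. Define the autoencoder-style joint P'(z,w) = q_θ(z|w)·p_θ(w|z) where q_θ(z|w) = p_θ(w|z)·π(z)/m_θ(w) with fixed prior π(z) > 0 and m_θ(w) = Σ_z p_θ(w|z)π(z). Then E_{(Z,W)∼P*}[∂/∂θ log P'(Z,W)] = −E_{(Z,W)∼P*}[∂/∂θ log m_θ(W)], which is in general nonzero (it vanishes iff the θ-derivative of the marginal m_θ has zero P*-expectation). -/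

import Mathlib

open Finset

/-- Inequality part of Corollary 1 (Lemma C.2): for the autoencoder-style joint
`P'(z,w) = q_θ(z|w) · p_θ(w|z)` with Bayes encoder `q_θ(z|w) = p_θ(w|z)π(z)/m_θ(w)`,
the expected gradient under a target distribution `P*(z,w) = μ(z)·p_{θ1}(w|z)` (decoder
correctly specified) equals `−E*[∂_θ log m_θ(W)]`, hence vanishes iff that residual
term has zero expectation. -/
theorem stmt_8 {𝒵 𝒲 : Type*} [Fintype 𝒵] [Fintype 𝒲]
    (p : ℝ → 𝒵 → 𝒲 → ℝ) (pri : 𝒵 → ℝ) (μ : 𝒵 → ℝ) (θ1 : ℝ)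
    (hp : ∀ θ z w, 0 < p θ z w) (hpsum : ∀ θ z, ∑ w, p θ z w = 1)
    (hdiff : ∀ z w, Differentiable ℝ (fun θ => p θ z w))
    (hpri : ∀ z, 0 < pri z)
    (hμ : ∀ z, 0 ≤ μ z) (hμsum : ∑ z, μ z = 1) :
    (∑ z, ∑ w, (μ z * p θ1 z w) *
        deriv (fun θ =>
          Real.log ((p θ z w * pri z / (∑ z', p θ z' w * pri z')) * p θ z w)) θ1)
      = -(∑ z, ∑ w, (μ z * p θ1 z w) *
          deriv (fun θ => Real.log (∑ z', p θ z' w * pri z')) θ1) ∧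
    ((∑ z, ∑ w, (μ z * p θ1 z w) *
        deriv (fun θ =>
          Real.log ((p θ z w * pri z / (∑ z', p θ z' w * pri z')) * p θ z w)) θ1) = 0
      ↔ (∑ z, ∑ w, (μ z * p θ1 z w) *
          deriv (fun θ => Real.log (∑ z', p θ z' w * pri z')) θ1) = 0) := by
  have hZ : Nonempty 𝒵 := by
    by_contra h
    rw [not_nonempty_iff] at h
    rw [Finset.univ_eq_empty, Finset.sum_empty] at hμsum
    norm_num at hμsum
  have hm_pos : ∀ θ w, 0 < ∑ z', p θ z' w * pri z' := fun θ w =>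
    Finset.sum_pos (fun z _ => mul_pos (hp θ z w) (hpri z)) Finset.univ_nonempty
  have hm_diff : ∀ w, Differentiable ℝ fun θ => ∑ z', p θ z' w * pri z' :=
    fun w => Differentiable.fun_sum fun z _ => (hdiff z w).mul_const _
  have hderiv : ∀ z w,
      deriv (fun θ =>
        Real.log ((p θ z w * pri z / (∑ z', p θ z' w * pri z')) * p θ z w)) θ1
      = 2 * (deriv (fun θ => p θ z w) θ1 / p θ1 z w)
        - deriv (fun θ => Real.log (∑ z', p θ z' w * pri z')) θ1 := by
    intro z w
    have hpe : ∀ θ, p θ z w ≠ 0 := fun θ => (hp θ z w).ne'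
    have hprie : pri z ≠ 0 := (hpri z).ne'
    have hme : ∀ θ, (∑ z', p θ z' w * pri z') ≠ 0 := fun θ => (hm_pos θ w).ne'
    have hfun : (fun θ => Real.log ((p θ z w * pri z / (∑ z', p θ z' w * pri z')) * p θ z w))
        = fun θ => ((Real.log (p θ z w) + Real.log (pri z)
            - Real.log (∑ z', p θ z' w * pri z')) + Real.log (p θ z w)) := by
      funext θ
      rw [Real.log_mul (div_ne_zero (mul_ne_zero (hpe θ) hprie) (hme θ)) (hpe θ),
        Real.log_div (mul_ne_zero (hpe θ) hprie) (hme θ),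
        Real.log_mul (hpe θ) hprie]
    rw [hfun]
    have h1 : HasDerivAt (fun θ => Real.log (p θ z w))
        (deriv (fun θ => p θ z w) θ1 / p θ1 z w) θ1 :=
      ((hdiff z w θ1).hasDerivAt).log (hpe θ1)
    have h2 : HasDerivAt (fun θ => Real.log (∑ z', p θ z' w * pri z'))
        (deriv (fun θ => ∑ z', p θ z' w * pri z') θ1 / (∑ z', p θ1 z' w * pri z')) θ1 :=
      ((hm_diff w θ1).hasDerivAt).log (hme θ1)
    have h3 := ((h1.add_const (Real.log (pri z))).fun_sub h2).fun_add h1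
    rw [h3.deriv, h2.deriv]
    ring
  have hsum0 : ∀ z, ∑ w, deriv (fun θ => p θ z w) θ1 = 0 := by
    intro z
    have h1 : HasDerivAt (fun θ => ∑ w, p θ z w)
        (∑ w, deriv (fun θ => p θ z w) θ1) θ1 :=
      HasDerivAt.fun_sum fun w _ => (hdiff z w θ1).hasDerivAt
    have h2 : (fun θ => ∑ w, p θ z w) = fun _ => (1 : ℝ) := funext fun θ => hpsum θ z
    rw [h2] at h1
    exact h1.unique (hasDerivAt_const θ1 1)
  have key : (∑ z, ∑ w, (μ z * p θ1 z w) *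
        deriv (fun θ =>
          Real.log ((p θ z w * pri z / (∑ z', p θ z' w * pri z')) * p θ z w)) θ1)
      = -(∑ z, ∑ w, (μ z * p θ1 z w) *
          deriv (fun θ => Real.log (∑ z', p θ z' w * pri z')) θ1) := by
    simp only [hderiv]
    rw [← Finset.sum_neg_distrib]
    refine Finset.sum_congr rfl fun z _ => ?_
    rw [← Finset.sum_neg_distrib]
    have heach : ∀ w, (μ z * p θ1 z w) *
        (2 * (deriv (fun θ => p θ z w) θ1 / p θ1 z w)
          - deriv (fun θ => Real.log (∑ z', p θ z' w * pri z')) θ1)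
        = 2 * μ z * deriv (fun θ => p θ z w) θ1
          + -((μ z * p θ1 z w) * deriv (fun θ => Real.log (∑ z', p θ z' w * pri z')) θ1) := by
      intro w
      have hpe : p θ1 z w ≠ 0 := (hp θ1 z w).ne'
      field_simp
      ring
    simp only [heach]
    rw [Finset.sum_add_distrib, ← Finset.mul_sum, hsum0, mul_zero, zero_add]
  refine ⟨key, ?_⟩
  rw [key, neg_eq_zero]
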